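/- The 3-dimensional commutative algebra with basis {e_0,e_1,e_2} and products e_0² = e_0, e_0e_1 = ½e_1, e_0e_2 = e_2, e_1² = −½e_2, all other products zero, over a field of characteristic ≠ 2, is a Jordan algebra and dimensionally nilpotent via d(e_i) = e_{i+1}, d(e_2) = 0. -/

import Mathlib

set_option maxHeartbeats 1600000

/-- The 3-dimensional algebra with e_0² = e_0, e_0e_1 = ½e_1, e_0e_2 = e_2,
e_1² = −½e_2 and all other products zero is a Jordan algebra and is dimensionally
nilpotent via d(e_0) = e_1, d(e_1) = e_2, d(e_2) = 0. -/
theorem dim3_jordan_case_lambda1 {K A : Type*} [Field K]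
    [NonUnitalNonAssocCommRing A] [Module K A] [SMulCommClass K A A] [IsScalarTower K A A]
    (h2 : (2 : K) ≠ 0)
    (e : Module.Basis (Fin 3) K A)
    (h00 : e 0 * e 0 = e 0)
    (h01 : e 0 * e 1 = (2 : K)⁻¹ • e 1)
    (h02 : e 0 * e 2 = e 2)
    (h11 : e 1 * e 1 = -((2 : K)⁻¹ • e 2))
    (h12 : e 1 * e 2 = 0)
    (h22 : e 2 * e 2 = 0) :
    (∀ x y : A, (x * x) * (y * x) = ((x * x) * y) * x) ∧
    ∃ d : Module.End K A, (∀ x y : A, d (x * y) = d x * y + x * d y) ∧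
      d (e 0) = e 1 ∧ d (e 1) = e 2 ∧ d (e 2) = 0 ∧ d ^ 3 = 0 ∧ d ^ 2 ≠ 0 := by
  have hpow : ∀ n : ℕ, (2 : K) ^ n ≠ 0 := fun n => pow_ne_zero n h2
  have h4 : (4 : K) ≠ 0 := by have := hpow 2; norm_num at this ⊢; exact this
  have h8 : (8 : K) ≠ 0 := by have := hpow 3; norm_num at this ⊢; exact this
  have h16 : (16 : K) ≠ 0 := by have := hpow 4; norm_num at this ⊢; exact this
  have h32 : (32 : K) ≠ 0 := by have := hpow 5; norm_num at this ⊢; exact this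
  have h64 : (64 : K) ≠ 0 := by have := hpow 6; norm_num at this ⊢; exact this
  have h128 : (128 : K) ≠ 0 := by have := hpow 7; norm_num at this ⊢; exact this
  have h256 : (256 : K) ≠ 0 := by have := hpow 8; norm_num at this ⊢; exact this
  have h512 : (512 : K) ≠ 0 := by have := hpow 9; norm_num at this ⊢; exact this
  have h1024 : (1024 : K) ≠ 0 := by have := hpow 10; norm_num at this ⊢; exact this
  have h10 : e 1 * e 0 = (2 : K)⁻¹ • e 1 := by rw [mul_comm, h01]
  have h20 : e 2 * e 0 = e 2 := by rw [mul_comm, h02]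
  have h21 : e 2 * e 1 = 0 := by rw [mul_comm, h12]
  have hdecomp : ∀ x : A, ∃ a b c : K, x = a • e 0 + b • e 1 + c • e 2 := by
    intro x
    refine ⟨e.repr x 0, e.repr x 1, e.repr x 2, ?_⟩
    have := e.sum_repr x
    rw [Fin.sum_univ_three] at this
    exact this.symm
  constructor
  · intro x y
    obtain ⟨a, b, c, rfl⟩ := hdecomp x
    obtain ⟨p, q, r, rfl⟩ := hdecomp y
    simp only [mul_add, add_mul, smul_mul_assoc, mul_smul_comm, h00, h01, h02, h10, h11,
      h12, h20, h21, h22, smul_add, smul_neg, smul_smul, smul_zero, mul_zero, zero_mul,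
      add_zero, zero_add, neg_mul, mul_neg]
    match_scalars
    all_goals try (field_simp; ring)
    all_goals try ring
  · refine ⟨e.constr K ![e 1, e 2, 0], ?_, ?_, ?_, ?_, ?_, ?_⟩
    · intro x y
      obtain ⟨a, b, c, rfl⟩ := hdecomp x
      obtain ⟨p, q, r, rfl⟩ := hdecomp y
      simp only [mul_add, add_mul, smul_mul_assoc, mul_smul_comm, h00, h01, h02, h10, h11,
        h12, h20, h21, h22, smul_add, smul_neg, smul_smul, smul_zero, mul_zero, zero_mul,
        add_zero, zero_add, neg_mul, mul_neg, map_add, map_smul, map_neg, map_zero,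
        Module.Basis.constr_basis, Matrix.cons_val_zero, Matrix.cons_val_one, Matrix.head_cons,
        Matrix.cons_val_two, Matrix.tail_cons]
      match_scalars
      all_goals try (field_simp; ring)
      all_goals try ring
    · simp [Module.Basis.constr_basis]
    · simp [Module.Basis.constr_basis]
    · simp [Module.Basis.constr_basis]
    · refine e.ext fun i => ?_
      fin_cases i <;>
        simp [pow_succ, Module.End.mul_apply, Module.Basis.constr_basis]
    · intro h
      have h1 : (e.constr K ![e 1, e 2, 0] ^ 2) (e 0) = e 2 := by
        simp [pow_succ, Module.End.mul_apply, Module.Basis.constr_basis]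
      rw [h] at h1
      exact (e.ne_zero 2) (by simpa using h1.symm)
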